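/- Fix n : ℕ and let X be the complex matrix indexed by bit strings (Fin n → Bool) with X z k = 1 if hammingDist z k = 1 and X z k = 0 otherwise (the n-qubit mixer Hamiltonian X = Σ_{j=1}^n σ_j^x expressed in the computational basis). Then for every real β and all bit strings z, k : Fin n → Bool, the (z,k) entry of Matrix.exp(−(i·β) • X) equals (cos β)^(n − hammingDist z k) · (−i · sin β)^(hammingDist z k). -/

import Mathlib

open Complex Matrix NormedSpace

noncomputable def sigmaX : Matrix Bool Bool ℂ := Matrix.of fun a b => if a = b then 0 else 1

noncomputable def HadU : (Matrix Bool Bool ℂ)ˣ where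
  val := Matrix.of fun a b => if a && b then -1 else 1
  inv := Matrix.of fun a b => if a && b then -(2⁻¹:ℂ) else 2⁻¹
  val_inv := by
    ext a b
    simp [Matrix.mul_apply, Fintype.sum_bool, Matrix.one_apply]
    cases a <;> cases b <;> norm_num
  inv_val := by
    ext a b
    simp [Matrix.mul_apply, Fintype.sum_bool, Matrix.one_apply]
    cases a <;> cases b <;> norm_num

lemma conj_diag (β : ℝ) :
    (-(Complex.I * β)) • sigmaX =
      (HadU : Matrix Bool Bool ℂ) *
        (Matrix.diagonal (fun a : Bool => if a then Complex.I * β else -(Complex.I * β))) *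
        ((HadU⁻¹ : (Matrix Bool Bool ℂ)ˣ) : Matrix Bool Bool ℂ) := by
  ext a b
  simp [HadU, sigmaX, Matrix.mul_apply, Fintype.sum_bool, Matrix.diagonal]
  cases a <;> cases b <;> simp <;> ring

lemma exp_sigmaX (β : ℝ) (a b : Bool) :
    (exp ((-(Complex.I * β)) • sigmaX)) a b =
      if a = b then (Real.cos β : ℂ) else -(Complex.I * Real.sin β) := by
  rw [conj_diag, Matrix.exp_units_conj, Matrix.exp_diagonal]
  have e1 : (Complex.I * β) = (β : ℂ) * I := by ring
  have e2 : (-(Complex.I * β)) = ((-β : ℝ) : ℂ) * I := by push_cast; ring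
  have h1 : Complex.exp (Complex.I * β) = Real.cos β + Complex.I * Real.sin β := by
    rw [e1, Complex.exp_mul_I, ← Complex.ofReal_cos, ← Complex.ofReal_sin]; ring
  have h2 : Complex.exp (-(Complex.I * β)) = Real.cos β - Complex.I * Real.sin β := by
    rw [e2, Complex.exp_mul_I, ← Complex.ofReal_cos, ← Complex.ofReal_sin]
    simp; ring
  simp only [HadU, Matrix.mul_apply, Fintype.sum_bool, Matrix.diagonal_apply, Pi.exp_def,
    ← Complex.exp_eq_exp_ℂ]
  cases a <;> cases b <;> simp [Matrix.of_apply, h1, h2] <;> ring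

open Kronecker in
noncomputable def kronL (p q : Type*) [Fintype p] [DecidableEq p] [Fintype q] [DecidableEq q] :
    Matrix p p ℂ →+* Matrix (p × q) (p × q) ℂ where
  toFun M := M ⊗ₖ (1 : Matrix q q ℂ)
  map_one' := Matrix.one_kronecker_one
  map_mul' A B := by rw [← Matrix.mul_kronecker_mul, one_mul]
  map_zero' := Matrix.zero_kronecker _
  map_add' A B := Matrix.add_kronecker _ _ _

open Kronecker in
noncomputable def kronR (p q : Type*) [Fintype p] [DecidableEq p] [Fintype q] [DecidableEq q] :
    Matrix q q ℂ →+* Matrix (p × q) (p × q) ℂ where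
  toFun M := (1 : Matrix p p ℂ) ⊗ₖ M
  map_one' := Matrix.one_kronecker_one
  map_mul' A B := by rw [← Matrix.mul_kronecker_mul, one_mul]
  map_zero' := Matrix.kronecker_zero _
  map_add' A B := Matrix.kronecker_add _ _ _

open Kronecker in
lemma continuous_kronL (p q : Type*) [Fintype p] [DecidableEq p] [Fintype q] [DecidableEq q] :
    Continuous (kronL p q) := by
  apply continuous_matrix
  rintro ⟨a, b⟩ ⟨c, d⟩
  show Continuous fun M : Matrix p p ℂ => M a c * (1 : Matrix q q ℂ) b d
  exact (continuous_id.matrix_elem a c).mul continuous_const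

open Kronecker in
lemma continuous_kronR (p q : Type*) [Fintype p] [DecidableEq p] [Fintype q] [DecidableEq q] :
    Continuous (kronR p q) := by
  apply continuous_matrix
  rintro ⟨a, b⟩ ⟨c, d⟩
  show Continuous fun M : Matrix q q ℂ => (1 : Matrix p p ℂ) a c * M b d
  exact continuous_const.mul (continuous_id.matrix_elem b d)

open Kronecker in
lemma exp_kron {p q : Type*} [Fintype p] [DecidableEq p] [Fintype q] [DecidableEq q]
    (A : Matrix p p ℂ) (B : Matrix q q ℂ) :
    exp (A ⊗ₖ (1 : Matrix q q ℂ) + (1 : Matrix p p ℂ) ⊗ₖ B) = (exp A) ⊗ₖ (exp B) := by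
  have hc : Commute (A ⊗ₖ (1 : Matrix q q ℂ)) ((1 : Matrix p p ℂ) ⊗ₖ B) := by
    unfold Commute SemiconjBy
    rw [← Matrix.mul_kronecker_mul, ← Matrix.mul_kronecker_mul, one_mul, mul_one, one_mul, mul_one]
  letI : SeminormedRing (Matrix p p ℂ) := Matrix.linftyOpSemiNormedRing
  letI : NormedRing (Matrix p p ℂ) := Matrix.linftyOpNormedRing
  letI : NormedAlgebra ℂ (Matrix p p ℂ) := Matrix.linftyOpNormedAlgebra
  letI : NormedAlgebra ℚ (Matrix p p ℂ) := Matrix.linftyOpNormedAlgebra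
  letI : SeminormedRing (Matrix q q ℂ) := Matrix.linftyOpSemiNormedRing
  letI : NormedRing (Matrix q q ℂ) := Matrix.linftyOpNormedRing
  letI : NormedAlgebra ℂ (Matrix q q ℂ) := Matrix.linftyOpNormedAlgebra
  letI : NormedAlgebra ℚ (Matrix q q ℂ) := Matrix.linftyOpNormedAlgebra
  letI : SeminormedRing (Matrix (p × q) (p × q) ℂ) := Matrix.linftyOpSemiNormedRing
  letI : NormedRing (Matrix (p × q) (p × q) ℂ) := Matrix.linftyOpNormedRing
  letI : NormedAlgebra ℂ (Matrix (p × q) (p × q) ℂ) := Matrix.linftyOpNormedAlgebra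
  rw [Matrix.exp_add_of_commute _ _ hc]
  have h1 : exp (A ⊗ₖ (1 : Matrix q q ℂ)) = (exp A) ⊗ₖ (1 : Matrix q q ℂ) :=
    (map_exp (kronL p q) (continuous_kronL p q) A).symm
  have h2 : exp ((1 : Matrix p p ℂ) ⊗ₖ B) = (1 : Matrix p p ℂ) ⊗ₖ (exp B) :=
    (map_exp (kronR p q) (continuous_kronR p q) B).symm
  rw [h1, h2, ← Matrix.mul_kronecker_mul, one_mul, mul_one]

lemma exp_reindex {p q : Type*} [Fintype p] [DecidableEq p] [Fintype q] [DecidableEq q]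
    (e : p ≃ q) (A : Matrix p p ℂ) :
    exp ((Matrix.reindex e e) A) = (Matrix.reindex e e) (exp A) := by
  letI : SeminormedRing (Matrix p p ℂ) := Matrix.linftyOpSemiNormedRing
  letI : NormedRing (Matrix p p ℂ) := Matrix.linftyOpNormedRing
  letI : NormedAlgebra ℂ (Matrix p p ℂ) := Matrix.linftyOpNormedAlgebra
  letI : NormedAlgebra ℚ (Matrix p p ℂ) := Matrix.linftyOpNormedAlgebra
  letI : SeminormedRing (Matrix q q ℂ) := Matrix.linftyOpSemiNormedRing
  letI : NormedRing (Matrix q q ℂ) := Matrix.linftyOpNormedRing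
  letI : NormedAlgebra ℂ (Matrix q q ℂ) := Matrix.linftyOpNormedAlgebra
  have hcont : Continuous (Matrix.reindexAlgEquiv ℂ ℂ e) := by
    apply continuous_matrix
    intro i j
    exact continuous_id.matrix_elem _ _
  exact (map_exp (Matrix.reindexAlgEquiv ℂ ℂ e : Matrix p p ℂ →+* Matrix q q ℂ) hcont A).symm

lemma hammingDist_cons {n : ℕ} (a c : Bool) (b d : Fin n → Bool) :
    hammingDist (Fin.cons a b : Fin (n+1) → Bool) (Fin.cons c d) = (if a = c then 0 else 1) + hammingDist b d := by
  unfold hammingDist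
  rw [Finset.card_filter, Finset.card_filter, Fin.sum_univ_succ]
  simp only [Fin.cons_zero, Fin.cons_succ]
  congr 1
  by_cases h : a = c <;> simp [h]

noncomputable def Xmat (n : ℕ) : Matrix (Fin n → Bool) (Fin n → Bool) ℂ :=
  Matrix.of (fun z k : Fin n → Bool => if hammingDist z k = 1 then (1 : ℂ) else 0)

def splitE (n : ℕ) : (Fin (n+1) → Bool) ≃ Bool × (Fin n → Bool) where
  toFun z := (z 0, Fin.tail z)
  invFun p := Fin.cons p.1 p.2
  left_inv z := Fin.cons_self_tail z
  right_inv p := by simp [Fin.tail_cons]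

open Kronecker in
lemma reindex_X (n : ℕ) :
    Matrix.reindex (splitE n) (splitE n) (Xmat (n+1)) =
      sigmaX ⊗ₖ (1 : Matrix (Fin n → Bool) (Fin n → Bool) ℂ) +
        (1 : Matrix Bool Bool ℂ) ⊗ₖ Xmat n := by
  ext ⟨a, b⟩ ⟨c, d⟩
  simp only [Matrix.reindex_apply, Matrix.submatrix_apply, Matrix.add_apply,
    Matrix.kroneckerMap_apply, Matrix.one_apply, Xmat, sigmaX, Matrix.of_apply]
  have hsymm : (splitE n).symm (a, b) = Fin.cons a b := rfl
  have hsymm2 : (splitE n).symm (c, d) = Fin.cons c d := rfl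
  rw [hsymm, hsymm2, hammingDist_cons]
  by_cases h : a = c
  · simp [h]
  · have hd : hammingDist b d = 0 ↔ b = d := hammingDist_eq_zero
    by_cases h2 : b = d
    · simp [h, h2]
    · have : ¬ (1 + hammingDist b d = 1) := by
        intro hh
        exact h2 (hd.mp (by omega))
      simp [h, h2, this]

open Kronecker in
theorem exp_mixer_entry (n : ℕ) (β : ℝ) (z k : Fin n → Bool) :
    (NormedSpace.exp ((-(Complex.I * β)) •
        (Matrix.of (fun z k : Fin n → Bool =>
          if hammingDist z k = 1 then (1 : ℂ) else 0)))) z k =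
      (Real.cos β : ℂ) ^ (n - hammingDist z k) *
        (-(Complex.I * Real.sin β)) ^ (hammingDist z k) := by
  induction n with
  | zero =>
    have hz : z = k := Subsingleton.elim z k
    have hX : (Matrix.of (fun z k : Fin 0 → Bool =>
        if hammingDist z k = 1 then (1 : ℂ) else 0)) = 0 := by
      ext x y
      have : x = y := Subsingleton.elim x y
      simp [this, hammingDist_self]
    rw [hX, smul_zero, NormedSpace.exp_zero, hz]
    simp [Matrix.one_apply, hammingDist_self]
  | succ m ih =>
    -- rewrite LHS via reindex
    have hXdef : (Matrix.of (fun z k : Fin (m+1) → Bool =>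
        if hammingDist z k = 1 then (1 : ℂ) else 0)) = Xmat (m+1) := rfl
    rw [hXdef]
    set e := splitE m
    have hre : (NormedSpace.exp ((-(Complex.I * β)) • Xmat (m+1))) z k =
        (Matrix.reindex e e (NormedSpace.exp ((-(Complex.I * β)) • Xmat (m+1)))) (e z) (e k) := by
      simp [Matrix.reindex_apply, Matrix.submatrix_apply]
    rw [hre, ← exp_reindex]
    have hsplit : Matrix.reindex e e ((-(Complex.I * β)) • Xmat (m+1)) =
        ((-(Complex.I * β)) • sigmaX) ⊗ₖ (1 : Matrix (Fin m → Bool) (Fin m → Bool) ℂ) +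
          (1 : Matrix Bool Bool ℂ) ⊗ₖ ((-(Complex.I * β)) • Xmat m) := by
      rw [Matrix.smul_kronecker, Matrix.kronecker_smul, ← smul_add, ← reindex_X]
      ext i j
      simp
      exact Or.inl rfl
    rw [hsplit, exp_kron]
    simp only [Matrix.kroneckerMap_apply]
    have h1 : (NormedSpace.exp ((-(Complex.I * β)) • sigmaX)) (e z).1 (e k).1 =
        if z 0 = k 0 then (Real.cos β : ℂ) else -(Complex.I * Real.sin β) :=
      exp_sigmaX β (z 0) (k 0)
    have h2 := ih (Fin.tail z) (Fin.tail k)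
    have hXm : (Matrix.of (fun z k : Fin m → Bool =>
        if hammingDist z k = 1 then (1 : ℂ) else 0)) = Xmat m := rfl
    rw [hXm] at h2
    rw [h1]
    show (if z 0 = k 0 then (Real.cos β : ℂ) else -(Complex.I * Real.sin β)) *
        (NormedSpace.exp ((-(Complex.I * β)) • Xmat m)) (Fin.tail z) (Fin.tail k) = _
    rw [h2]
    have hdc : hammingDist z k = (if z 0 = k 0 then 0 else 1) + hammingDist (Fin.tail z) (Fin.tail k) := by
      conv_lhs => rw [← Fin.cons_self_tail z, ← Fin.cons_self_tail k]
      exact hammingDist_cons (z 0) (k 0) (Fin.tail z) (Fin.tail k)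
    have hle : hammingDist (Fin.tail z) (Fin.tail k) ≤ m := by
      simpa using (hammingDist_le_card_fintype (x := Fin.tail z) (y := Fin.tail k))
    by_cases h : z 0 = k 0
    · rw [hdc]
      simp only [h, if_true, if_pos]
      have : m + 1 - (0 + hammingDist (Fin.tail z) (Fin.tail k)) =
          (m - hammingDist (Fin.tail z) (Fin.tail k)) + 1 := by omega
      rw [this, zero_add, pow_succ]
      ring
    · rw [hdc]
      simp only [h, if_false]
      have : m + 1 - (1 + hammingDist (Fin.tail z) (Fin.tail k)) =
          m - hammingDist (Fin.tail z) (Fin.tail k) := by omega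
      rw [this, add_comm 1, pow_succ]
      ring
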